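/- For every q ∈ [0,1], every finite Borel measure ν on ℝ^ℤ and every n ∈ ℤ, the Markov operators π_n satisfy the braid relation: π_n(π_{n+1}(π_n ν)) = π_{n+1}(π_n(π_{n+1} ν)). -/

import Mathlib

open MeasureTheory
open scoped NNReal ENNReal

/-- The transposition operator `τ_n` on configurations `η : ℤ → ℝ`:
exchanges coordinates `n` and `n+1`, leaving all other coordinates unchanged. -/
def tauOp (n : ℤ) (η : ℤ → ℝ) : ℤ → ℝ :=
  fun k => if k = n then η (n + 1) else if k = n + 1 then η n else η k

/-- The sorting operator `σ_n` on configurations `η : ℤ → ℝ`: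
sorts coordinates `n` and `n+1` into decreasing order. -/
def sigmaOp (n : ℤ) (η : ℤ → ℝ) : ℤ → ℝ :=
  fun k => if k = n then max (η n) (η (n + 1))
    else if k = n + 1 then min (η n) (η (n + 1)) else η k

/-- The Markov operator `π_n ν = q·(τ_n)_*ν + (1−q)·(σ_n)_*ν` on finite Borel
measures on `ℝ^ℤ` (with the product topology / Borel σ-algebra). -/
noncomputable def piOp (q : ℝ≥0) (n : ℤ) (ν : Measure (ℤ → ℝ)) : Measure (ℤ → ℝ) :=
  q • ν.map (tauOp n) + (1 - q) • ν.map (sigmaOp n)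

lemma measurable_tauOp (n : ℤ) : Measurable (tauOp n) := by
  apply measurable_pi_lambda
  intro k
  unfold tauOp
  split_ifs <;> exact measurable_pi_apply _

lemma measurable_sigmaOp (n : ℤ) : Measurable (sigmaOp n) := by
  apply measurable_pi_lambda
  intro k
  unfold sigmaOp
  split_ifs
  · exact (measurable_pi_apply _).max (measurable_pi_apply _)
  · exact (measurable_pi_apply _).min (measurable_pi_apply _)
  · exact measurable_pi_apply _

/-- Update the three coordinates `n`, `n+1`, `n+2` of a configuration. -/
def upd3 (n : ℤ) (η : ℤ → ℝ) (x y z : ℝ) : ℤ → ℝ :=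
  fun k => if k = n then x else if k = n + 1 then y else if k = n + 2 then z else η k

lemma upd3_eta (n : ℤ) (η : ℤ → ℝ) : upd3 n η (η n) (η (n+1)) (η (n+2)) = η := by
  funext k
  unfold upd3
  split_ifs <;> simp_all

lemma tau_upd3 (n : ℤ) (η : ℤ → ℝ) (x y z : ℝ) :
    tauOp n (upd3 n η x y z) = upd3 n η y x z := by
  funext k
  simp only [tauOp, upd3]
  split_ifs <;> first | rfl | omega

lemma tau'_upd3 (n : ℤ) (η : ℤ → ℝ) (x y z : ℝ) :
    tauOp (n+1) (upd3 n η x y z) = upd3 n η x z y := by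
  funext k
  simp only [tauOp, upd3]
  split_ifs <;> first | rfl | omega

lemma sigma_upd3 (n : ℤ) (η : ℤ → ℝ) (x y z : ℝ) :
    sigmaOp n (upd3 n η x y z) = upd3 n η (max x y) (min x y) z := by
  funext k
  simp only [sigmaOp, upd3]
  split_ifs <;> first | rfl | omega

lemma sigma'_upd3 (n : ℤ) (η : ℤ → ℝ) (x y z : ℝ) :
    sigmaOp (n+1) (upd3 n η x y z) = upd3 n η x (max y z) (min y z) := by
  funext k
  simp only [sigmaOp, upd3]
  split_ifs <;> first | rfl | omega

/-- The dual (function-level) action of `piOp`. -/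
noncomputable def Fop (q p : ℝ≥0∞) (n : ℤ) (f : (ℤ → ℝ) → ℝ≥0∞) : (ℤ → ℝ) → ℝ≥0∞ :=
  fun η => q * f (tauOp n η) + p * f (sigmaOp n η)

lemma measurable_Fop (q p : ℝ≥0∞) (n : ℤ) {f : (ℤ → ℝ) → ℝ≥0∞} (hf : Measurable f) :
    Measurable (Fop q p n f) :=
  ((hf.comp (measurable_tauOp n)).const_mul q).add
    ((hf.comp (measurable_sigmaOp n)).const_mul p)

/-- The pointwise braid identity for the dual action. -/
lemma Fop_braid (q p : ℝ≥0∞) (n : ℤ) (f : (ℤ → ℝ) → ℝ≥0∞) (η : ℤ → ℝ) :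
    Fop q p n (Fop q p (n+1) (Fop q p n f)) η
      = Fop q p (n+1) (Fop q p n (Fop q p (n+1) f)) η := by
  simp only [Fop]
  rw [← upd3_eta n η]
  simp only [tau_upd3, tau'_upd3, sigma_upd3, sigma'_upd3]
  generalize η n = a
  generalize η (n+1) = b
  generalize η (n+2) = c
  rcases le_total a b with h1 | h1 <;> rcases le_total b c with h2 | h2 <;>
    rcases le_total a c with h3 | h3 <;>
    simp_all [max_def, min_def] <;>
    first
      | ring1
      | (obtain rfl : a = b := le_antisymm (by linarith) (by linarith)
         obtain rfl : a = c := le_antisymm (by linarith) (by linarith)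
         ring1)

lemma nnreal_smul_measure {α : Type*} [MeasurableSpace α] (q : ℝ≥0) (μ : Measure α) :
    q • μ = (q : ℝ≥0∞) • μ := by
  ext s hs
  simp only [Measure.smul_apply, ENNReal.smul_def, smul_eq_mul]

lemma lintegral_piOp (q : ℝ≥0) (n : ℤ) (ν : Measure (ℤ → ℝ)) (f : (ℤ → ℝ) → ℝ≥0∞)
    (hf : Measurable f) :
    ∫⁻ η, f η ∂(piOp q n ν) = ∫⁻ η, Fop (q : ℝ≥0∞) ((1 - q : ℝ≥0) : ℝ≥0∞) n f η ∂ν := by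
  simp only [Fop]
  rw [piOp, nnreal_smul_measure, nnreal_smul_measure]
  rw [lintegral_add_measure, lintegral_smul_measure, lintegral_smul_measure, smul_eq_mul, smul_eq_mul,
    lintegral_map hf (measurable_tauOp n), lintegral_map hf (measurable_sigmaOp n),
    ← lintegral_const_mul _ (show Measurable fun a => f (tauOp n a) from
        hf.comp (measurable_tauOp n)),
    ← lintegral_const_mul _ (show Measurable fun a => f (sigmaOp n a) from
        hf.comp (measurable_sigmaOp n)),
    ← lintegral_add_left ((show Measurable fun a => f (tauOp n a) from
        hf.comp (measurable_tauOp n)).const_mul _)]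

/-- The braid relation for the Markov operators `π_n`:
`π_n(π_{n+1}(π_n ν)) = π_{n+1}(π_n(π_{n+1} ν))`. -/
theorem piOp_braid (q : ℝ≥0) (hq : q ≤ 1) (ν : Measure (ℤ → ℝ))
    [IsFiniteMeasure ν] (n : ℤ) :
    piOp q n (piOp q (n + 1) (piOp q n ν)) =
      piOp q (n + 1) (piOp q n (piOp q (n + 1) ν)) := by
  ext A hA
  have hf : Measurable (A.indicator (1 : (ℤ → ℝ) → ℝ≥0∞)) := measurable_one.indicator hA
  set Q : ℝ≥0∞ := (q : ℝ≥0∞)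
  set P : ℝ≥0∞ := ((1 - q : ℝ≥0) : ℝ≥0∞)
  calc piOp q n (piOp q (n + 1) (piOp q n ν)) A
      = ∫⁻ η, A.indicator 1 η ∂(piOp q n (piOp q (n + 1) (piOp q n ν))) :=
        (lintegral_indicator_one hA).symm
    _ = ∫⁻ η, Fop Q P n (Fop Q P (n+1) (Fop Q P n (A.indicator 1))) η ∂ν := by
        rw [lintegral_piOp _ _ _ _ hf,
          lintegral_piOp _ _ _ _ (measurable_Fop _ _ _ hf),
          lintegral_piOp _ _ _ _ (measurable_Fop _ _ _ (measurable_Fop _ _ _ hf))]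
    _ = ∫⁻ η, Fop Q P (n+1) (Fop Q P n (Fop Q P (n+1) (A.indicator 1))) η ∂ν :=
        lintegral_congr (Fop_braid Q P n (A.indicator 1))
    _ = ∫⁻ η, A.indicator 1 η ∂(piOp q (n + 1) (piOp q n (piOp q (n + 1) ν))) := by
        rw [lintegral_piOp _ _ _ _ hf,
          lintegral_piOp _ _ _ _ (measurable_Fop _ _ _ hf),
          lintegral_piOp _ _ _ _ (measurable_Fop _ _ _ (measurable_Fop _ _ _ hf))]
    _ = piOp q (n + 1) (piOp q n (piOp q (n + 1) ν)) A :=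
        lintegral_indicator_one hA
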